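/- arXiv:1803.07732 — 2 statements merged into one kernel-verified Lean document; each statement's English description precedes it below -/
import Mathlib

section
/- The shortest distance from the Bernstein ellipse E_ρ (ρ > 1) to the interval [-1,1] equals (ρ + ρ^{-1})/2 - 1; that is, the infimum over z ∈ E_ρ and x ∈ [-1,1] of |z - x| is (ρ+ρ^{-1})/2 - 1, and in particular min_{z ∈ E_ρ} |1+z| = (ρ+ρ^{-1})/2 - 1. -/
lemma bernstein_z_eq (ρ θ : ℝ) :
    ((ρ : ℂ) * Complex.exp (θ * Complex.I) +
      (ρ : ℂ)⁻¹ * Complex.exp (-(θ * Complex.I))) / 2 =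
    Complex.ofReal ((ρ + ρ⁻¹) / 2 * Real.cos θ) +
      Complex.ofReal ((ρ - ρ⁻¹) / 2 * Real.sin θ) * Complex.I := by
  rw [show -(↑θ * Complex.I) = ((-θ : ℝ) : ℂ) * Complex.I by push_cast; ring,
    Complex.exp_mul_I, Complex.exp_mul_I, ← Complex.ofReal_cos, ← Complex.ofReal_sin,
    ← Complex.ofReal_cos, ← Complex.ofReal_sin, Real.cos_neg, Real.sin_neg]
  push_cast
  ring

lemma bernstein_key (ρ θ x : ℝ) (hρ : 1 < ρ) (hx : x ∈ Set.Icc (-1 : ℝ) 1) :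
    (ρ + ρ⁻¹) / 2 - 1 ≤ ‖(((ρ : ℂ) * Complex.exp (θ * Complex.I) +
      (ρ : ℂ)⁻¹ * Complex.exp (-(θ * Complex.I))) / 2 - (x : ℂ))‖ := by
  have hρ0 : (0:ℝ) < ρ := by linarith
  have hinv : 0 < ρ⁻¹ := inv_pos.mpr hρ0
  have hinv1 : ρ⁻¹ < 1 := by
    rw [inv_lt_one_iff₀]; right; exact hρ
  have hmul : ρ * ρ⁻¹ = 1 := mul_inv_cancel₀ (ne_of_gt hρ0)
  have h2 : 2 < ρ + ρ⁻¹ := by nlinarith [mul_nonneg hinv.le (sq_nonneg (ρ - 1))]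
  have hx1 := hx.1
  have hx2 := hx.2
  have heq : ((ρ : ℂ) * Complex.exp (θ * Complex.I) +
      (ρ : ℂ)⁻¹ * Complex.exp (-(θ * Complex.I))) / 2 - (x : ℂ) =
      Complex.ofReal ((ρ + ρ⁻¹) / 2 * Real.cos θ - x) +
      Complex.ofReal ((ρ - ρ⁻¹) / 2 * Real.sin θ) * Complex.I := by
    rw [bernstein_z_eq]; push_cast; ring
  rw [heq, Complex.norm_def, Complex.normSq_add_mul_I]
  rw [Real.le_sqrt (by linarith)]
  have hpyth := Real.sin_sq_add_cos_sq θ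
  have hc1 := Real.neg_one_le_cos θ
  have hc2 := Real.cos_le_one θ
  have hcx : Real.cos θ * x ≤ 1 := by nlinarith
  nlinarith [sq_nonneg (Real.cos θ - x), mul_nonneg (by linarith : (0:ℝ) ≤ (ρ + ρ⁻¹)/2 - 1) (by linarith : (0:ℝ) ≤ 1 - Real.cos θ * x), sq_nonneg (Real.sin θ)]
  positivity

/-- The shortest distance from the Bernstein ellipse `E_ρ` (`ρ > 1`) to `[-1,1]`
equals `(ρ+ρ⁻¹)/2 - 1`, and in particular `min_{z ∈ E_ρ} |1+z| = (ρ+ρ⁻¹)/2 - 1`. -/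
theorem bernstein_ellipse_dist_to_interval (ρ : ℝ) (hρ : 1 < ρ) :
    IsLeast {r : ℝ | ∃ θ : ℝ, ∃ x ∈ Set.Icc (-1 : ℝ) 1,
        r = ‖(((ρ : ℂ) * Complex.exp (θ * Complex.I) +
          (ρ : ℂ)⁻¹ * Complex.exp (-(θ * Complex.I))) / 2 - (x : ℂ))‖}
      ((ρ + ρ⁻¹) / 2 - 1) ∧
    IsLeast {r : ℝ | ∃ θ : ℝ,
        r = ‖(1 + ((ρ : ℂ) * Complex.exp (θ * Complex.I) +
          (ρ : ℂ)⁻¹ * Complex.exp (-(θ * Complex.I))) / 2)‖}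
      ((ρ + ρ⁻¹) / 2 - 1) := by
  have hρ0 : (0:ℝ) < ρ := by linarith
  have hinv : 0 < ρ⁻¹ := inv_pos.mpr hρ0
  have hinv1 : ρ⁻¹ < 1 := by rw [inv_lt_one_iff₀]; right; exact hρ
  have hmul : ρ * ρ⁻¹ = 1 := mul_inv_cancel₀ (ne_of_gt hρ0)
  have h2 : 2 < ρ + ρ⁻¹ := by nlinarith [mul_nonneg hinv.le (sq_nonneg (ρ - 1))]
  have hval : ∀ θ : ℝ, Real.cos θ = -1 → Real.sin θ = 0 →
      ‖(((ρ : ℂ) * Complex.exp (θ * Complex.I) +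
        (ρ : ℂ)⁻¹ * Complex.exp (-(θ * Complex.I))) / 2 - ((-1 : ℝ) : ℂ))‖ =
      (ρ + ρ⁻¹) / 2 - 1 := by
    intro θ hc hs
    have heq : ((ρ : ℂ) * Complex.exp (θ * Complex.I) +
        (ρ : ℂ)⁻¹ * Complex.exp (-(θ * Complex.I))) / 2 - ((-1 : ℝ) : ℂ) =
        Complex.ofReal (1 - (ρ + ρ⁻¹) / 2) := by
      rw [bernstein_z_eq, hc, hs]; push_cast; ring
    rw [heq, Complex.norm_real, Real.norm_eq_abs, abs_of_nonpos (by linarith)]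
    ring
  constructor
  · constructor
    · refine ⟨Real.pi, -1, ⟨le_refl _, by norm_num⟩, ?_⟩
      rw [show ((-1:ℝ):ℂ) = ((-1:ℝ):ℂ) from rfl] at *
      exact (hval Real.pi Real.cos_pi Real.sin_pi).symm
    · rintro r ⟨θ, x, hx, rfl⟩
      exact bernstein_key ρ θ x hρ hx
  · constructor
    · refine ⟨Real.pi, ?_⟩
      have : (1 : ℂ) + ((ρ : ℂ) * Complex.exp (Real.pi * Complex.I) +
          (ρ : ℂ)⁻¹ * Complex.exp (-(Real.pi * Complex.I))) / 2 =
          ((ρ : ℂ) * Complex.exp (Real.pi * Complex.I) +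
          (ρ : ℂ)⁻¹ * Complex.exp (-(Real.pi * Complex.I))) / 2 - ((-1 : ℝ) : ℂ) := by
        push_cast; ring
      rw [this]
      exact (hval Real.pi Real.cos_pi Real.sin_pi).symm
    · rintro r ⟨θ, rfl⟩
      have : (1 : ℂ) + ((ρ : ℂ) * Complex.exp (θ * Complex.I) +
          (ρ : ℂ)⁻¹ * Complex.exp (-(θ * Complex.I))) / 2 =
          ((ρ : ℂ) * Complex.exp (θ * Complex.I) +
          (ρ : ℂ)⁻¹ * Complex.exp (-(θ * Complex.I))) / 2 - ((-1 : ℝ) : ℂ) := by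
        push_cast; ring
      rw [this]
      exact bernstein_key ρ θ (-1) hρ ⟨le_refl _, by norm_num⟩
end

section
/- For integers α, β with α < 0 and β ≥ 0, the generalized Jacobi polynomial J_N^{α,β}(x) = (1-x)^{-α} P_{N+α}^{-α,β}(x) attains its maximum absolute value over [-1,1] at x = -1, and ‖J_N^{α,β}‖_{L^∞[-1,1]} = 2^{|α|}·C(ñ+β, ñ) where ñ = N+α and C denotes the binomial coefficient. -/
open Finset in
/-- The classical Jacobi polynomial `P_n^{a,b}` with nonnegative integer parameters,
normalized so that `P_n^{a,b}(1) = C(n+a,n)`. -/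
noncomputable def jacobiP (n a b : ℕ) (x : ℝ) : ℝ :=
  ∑ s ∈ Finset.range (n + 1),
    (Nat.choose (n + a) (n - s) : ℝ) * (Nat.choose (n + b) s : ℝ) *
      ((x - 1) / 2) ^ s * ((x + 1) / 2) ^ (n - s)

open Finset

noncomputable def cc (n a b s : ℕ) : ℝ :=
  (-1 : ℝ) ^ s * ((n + a).choose (n - s)) * ((n + b).choose s)

noncomputable def phi (p q : ℕ) (x : ℝ) : ℝ := (1 - x) ^ p * (1 + x) ^ q

noncomputable def Dphi (p q : ℕ) (x : ℝ) : ℝ :=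
  -(p : ℝ) * phi (p - 1) q x + (q : ℝ) * phi p (q - 1) x

noncomputable def Jf (n a b : ℕ) (x : ℝ) : ℝ :=
  ∑ s ∈ Finset.range (n + 1), cc n a b s * phi (a + s) (n - s) x

noncomputable def Jf1 (n a b : ℕ) (x : ℝ) : ℝ :=
  ∑ s ∈ Finset.range (n + 1), cc n a b s * Dphi (a + s) (n - s) x

noncomputable def Jf2 (n a b : ℕ) (x : ℝ) : ℝ :=
  ∑ s ∈ Finset.range (n + 1), cc n a b s *
    (-((a + s : ℕ) : ℝ) * Dphi (a + s - 1) (n - s) x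
      + ((n - s : ℕ) : ℝ) * Dphi (a + s) (n - s - 1) x)

lemma nsub1 (n m : ℕ) : n + (m + 1) - 1 = n + m := by omega
lemma nsub2 (n m : ℕ) : n + 1 + m - 1 = n + m := by omega

lemma terml (n a b s k : ℕ) (ha : 1 ≤ a) (hn : n = s + k) (x : ℝ) :
    (1 - x) * (1 + x) * (-((a + s : ℕ) : ℝ) * Dphi (a + s - 1) k x
        + (k : ℝ) * Dphi (a + s) (k - 1) x)
      + (((a : ℝ) + b) - ((b : ℝ) - a + 2) * x) * Dphi (a + s) k x
      + (((n : ℝ) + a) * ((n : ℝ) + b + 1)) * phi (a + s) k x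
    = ((a : ℝ) + s) * s * phi (a + s - 1) (k + 1) x
      + ((k : ℝ) * ((k : ℝ) + b) + ((a : ℝ) + s) * s) * phi (a + s) k x
      + (k : ℝ) * ((k : ℝ) + b) * phi (a + s + 1) (k - 1) x := by
  subst hn
  obtain ⟨A, rfl⟩ : ∃ A, a = A + 1 := ⟨a - 1, by omega⟩
  simp only [phi, Dphi]
  rcases A with _ | A <;> rcases s with _ | s <;> rcases k with _ | _ | k <;>
    · simp only [nsub1, nsub2, Nat.add_sub_cancel, Nat.add_sub_cancel_left,
        Nat.zero_add, Nat.add_zero, Nat.zero_sub, Nat.sub_zero, Nat.sub_self, pow_zero,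
        Nat.cast_zero]
      push_cast
      ring

lemma cancel (n a b i : ℕ) (h : i < n) :
    cc n a b (i + 1) * (((a : ℝ) + (i + 1)) * ((i : ℕ) + 1 : ℝ))
      + cc n a b i * (((n - i : ℕ) : ℝ) * (((n - i : ℕ) : ℝ) + (b : ℝ))) = 0 := by
  have e1 : (n + a).choose (n - (i + 1)) * (a + i + 1) = (n + a).choose (n - i) * (n - i) := by
    have h3 : n - (i + 1) = n - i - 1 := by omega
    have e := Nat.choose_succ_right_eq (n + a) (n - i - 1)
    rw [show n - i - 1 + 1 = n - i from by omega, show n + a - (n - i - 1) = a + i + 1 from by omega] at e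
    rw [h3]
    exact e.symm
  have e2 : (n + b).choose (i + 1) * (i + 1) = (n + b).choose i * (n + b - i) :=
    Nat.choose_succ_right_eq (n + b) i
  have e3 : ((n + a).choose (n - (i + 1)) * (a + i + 1)) * ((n + b).choose (i + 1) * (i + 1))
      = ((n + a).choose (n - i) * (n - i)) * ((n + b).choose i * (n + b - i)) := by
    rw [e1, e2]
  have e4 := congrArg (fun m : ℕ => (m : ℝ)) e3
  have hbn : ((n + b - i : ℕ) : ℝ) = ((n - i : ℕ) : ℝ) + (b : ℝ) := by
    have : n + b - i = (n - i) + b := by omega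
    rw [this]; push_cast; ring
  simp only [Nat.cast_mul, hbn] at e4
  simp only [cc, pow_succ]
  push_cast at e4 ⊢
  linear_combination (-(-1 : ℝ) ^ i) * e4

lemma ode (n a b : ℕ) (ha : 1 ≤ a) (x : ℝ) :
    (1 - x) * (1 + x) * Jf2 n a b x
      + (((a : ℝ) + b) - ((b : ℝ) - a + 2) * x) * Jf1 n a b x
      + (((n : ℝ) + a) * ((n : ℝ) + b + 1)) * Jf n a b x = 0 := by
  have main : (1 - x) * (1 + x) * Jf2 n a b x
      + (((a : ℝ) + b) - ((b : ℝ) - a + 2) * x) * Jf1 n a b x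
      + (((n : ℝ) + a) * ((n : ℝ) + b + 1)) * Jf n a b x
      = ∑ s ∈ Finset.range (n + 1),
          (cc n a b s * (((a : ℝ) + s) * s) * phi (a + s - 1) (n - s + 1) x
          + cc n a b s * (((n - s : ℕ) : ℝ) * (((n - s : ℕ) : ℝ) + b)) * phi (a + s) (n - s) x
          + cc n a b s * (((a : ℝ) + s) * s) * phi (a + s) (n - s) x
          + cc n a b s * (((n - s : ℕ) : ℝ) * (((n - s : ℕ) : ℝ) + b)) * phi (a + s + 1) (n - s - 1) x) := by
    unfold Jf Jf1 Jf2
    rw [Finset.mul_sum, Finset.mul_sum, Finset.mul_sum, ← Finset.sum_add_distrib,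
      ← Finset.sum_add_distrib]
    refine Finset.sum_congr rfl fun s hs => ?_
    have hsn : s ≤ n := by
      have := Finset.mem_range.mp hs; omega
    linear_combination (cc n a b s) * terml n a b s (n - s) ha (by omega) x
  rw [main]
  rw [Finset.sum_add_distrib, Finset.sum_add_distrib, Finset.sum_add_distrib]
  have key1 : (∑ s ∈ Finset.range (n + 1),
        cc n a b s * (((a : ℝ) + s) * s) * phi (a + s - 1) (n - s + 1) x)
      + ∑ s ∈ Finset.range (n + 1),
        cc n a b s * (((n - s : ℕ) : ℝ) * (((n - s : ℕ) : ℝ) + b)) * phi (a + s) (n - s) x = 0 := by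
    rw [Finset.sum_range_succ' (fun s => cc n a b s * (((a : ℝ) + s) * s) * phi (a + s - 1) (n - s + 1) x) n]
    rw [Finset.sum_range_succ]
    simp only [Nat.sub_self, Nat.cast_zero, mul_zero, zero_mul, add_zero]
    rw [← Finset.sum_add_distrib]
    refine Finset.sum_eq_zero fun i hi => ?_
    have hin : i < n := Finset.mem_range.mp hi
    rw [show a + (i + 1) - 1 = a + i from by omega, show n - (i + 1) + 1 = n - i from by omega]
    have hc := cancel n a b i hin
    push_cast at hc ⊢
    linear_combination (phi (a + i) (n - i) x) * hc
  have key2 : (∑ s ∈ Finset.range (n + 1),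
        cc n a b s * (((a : ℝ) + s) * s) * phi (a + s) (n - s) x)
      + ∑ s ∈ Finset.range (n + 1),
        cc n a b s * (((n - s : ℕ) : ℝ) * (((n - s : ℕ) : ℝ) + b)) * phi (a + s + 1) (n - s - 1) x = 0 := by
    rw [Finset.sum_range_succ' (fun s => cc n a b s * (((a : ℝ) + s) * s) * phi (a + s) (n - s) x) n]
    rw [Finset.sum_range_succ]
    simp only [Nat.sub_self, Nat.cast_zero, mul_zero, zero_mul, add_zero]
    rw [← Finset.sum_add_distrib]
    refine Finset.sum_eq_zero fun i hi => ?_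
    have hin : i < n := Finset.mem_range.mp hi
    rw [show a + (i + 1) = a + i + 1 from by omega, show n - (i + 1) = n - i - 1 from by omega]
    have hc := cancel n a b i hin
    push_cast at hc ⊢
    linear_combination (phi (a + i + 1) (n - i - 1) x) * hc
  linarith [key1, key2]

lemma hasDerivAt_phi (p q : ℕ) (x : ℝ) :
    HasDerivAt (fun y => phi p q y) (Dphi p q x) x := by
  have h1 : HasDerivAt (fun y : ℝ => (1 - y) ^ p) (-(p : ℝ) * (1 - x) ^ (p - 1)) x := by
    have := (hasDerivAt_pow p (1 - x)).comp x ((hasDerivAt_const x (1 : ℝ)).fun_sub (hasDerivAt_id x))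
    exact this.congr_deriv (by ring)
  have h2 : HasDerivAt (fun y : ℝ => (1 + y) ^ q) ((q : ℝ) * (1 + x) ^ (q - 1)) x := by
    have := (hasDerivAt_pow q (1 + x)).comp x ((hasDerivAt_const x (1 : ℝ)).fun_add (hasDerivAt_id x))
    exact this.congr_deriv (by ring)
  have := h1.fun_mul h2
  exact this.congr_deriv (by simp only [Dphi, phi]; ring)

lemma hasDerivAt_Dphi (p q : ℕ) (x : ℝ) :
    HasDerivAt (fun y => Dphi p q y)
      (-((p : ℕ) : ℝ) * Dphi (p - 1) q x + ((q : ℕ) : ℝ) * Dphi p (q - 1) x) x := by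
  simpa only [Dphi] using
    ((hasDerivAt_phi (p - 1) q x).const_mul (-(p : ℝ))).fun_add
      ((hasDerivAt_phi p (q - 1) x).const_mul (q : ℝ))

lemma hasDerivAt_Jf (n a b : ℕ) (x : ℝ) :
    HasDerivAt (fun y => Jf n a b y) (Jf1 n a b x) x := by
  simpa only [Jf, Jf1] using
    HasDerivAt.fun_sum (fun s _ => (hasDerivAt_phi (a + s) (n - s) x).const_mul (cc n a b s))

lemma hasDerivAt_Jf1 (n a b : ℕ) (x : ℝ) :
    HasDerivAt (fun y => Jf1 n a b y) (Jf2 n a b x) x := by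
  simpa only [Jf1, Jf2] using
    HasDerivAt.fun_sum (fun s _ => (hasDerivAt_Dphi (a + s) (n - s) x).const_mul (cc n a b s))

lemma sq_le_endpoint (n a b : ℕ) (ha : 1 ≤ a) {x : ℝ} (hx : x ∈ Set.Icc (-1:ℝ) 1) :
    (Jf n a b x)^2 ≤ (Jf n a b (-1))^2 := by
  have ha' : (1:ℝ) ≤ (a:ℝ) := by exact_mod_cast ha
  have hn0 : (0:ℝ) ≤ (n:ℝ) := Nat.cast_nonneg n
  have hb0 : (0:ℝ) ≤ (b:ℝ) := Nat.cast_nonneg b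
  set lam : ℝ := ((n:ℝ)+a) * ((n:ℝ)+b+1) with hlam
  have hlam0 : 0 < lam := by rw [hlam]; nlinarith
  set F : ℝ → ℝ := fun y => (Jf n a b y)^2 + (1 - y^2) * (Jf1 n a b y)^2 / lam with hF
  have hFd : ∀ y : ℝ, HasDerivAt F
      (2 * Jf n a b y * Jf1 n a b y
        + ((-2*y) * (Jf1 n a b y)^2 + (1-y^2) * (2 * Jf1 n a b y * Jf2 n a b y)) / lam) y := by
    intro y
    have h1 := hasDerivAt_Jf n a b y
    have h2 := hasDerivAt_Jf1 n a b y
    have hs : HasDerivAt (fun y => (Jf n a b y)^2) (2 * Jf n a b y * Jf1 n a b y) y := by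
      have := h1.fun_pow 2
      norm_num at this
      exact this.congr_deriv (by ring)
    have hsq1 : HasDerivAt (fun y => (Jf1 n a b y)^2) (2 * Jf1 n a b y * Jf2 n a b y) y := by
      have := h2.fun_pow 2
      norm_num at this
      exact this.congr_deriv (by ring)
    have hq : HasDerivAt (fun y : ℝ => (1 - y^2)) (-2*y) y := by
      have := (hasDerivAt_const y (1:ℝ)).fun_sub (hasDerivAt_pow 2 y)
      exact this.congr_deriv (by norm_num)
    exact hs.add ((hq.mul hsq1).div_const lam)
  have hanti : AntitoneOn F (Set.Icc (-1:ℝ) 1) := by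
    apply antitoneOn_of_deriv_nonpos (convex_Icc _ _)
    · exact fun y hy => (hFd y).continuousAt.continuousWithinAt
    · intro y hy
      exact (hFd y).differentiableAt.differentiableWithinAt
    · intro y hy
      rw [interior_Icc] at hy
      rw [(hFd y).deriv]
      have hode := ode n a b ha y
      have hbr : 0 ≤ ((a:ℝ)+b) - ((b:ℝ)-a+1)*y := by nlinarith [hy.1.le, hy.2.le]
      have expr : 2 * Jf n a b y * Jf1 n a b y
          + ((-2*y) * (Jf1 n a b y)^2 + (1-y^2) * (2 * Jf1 n a b y * Jf2 n a b y)) / lam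
          = -(2 * (Jf1 n a b y)^2 * (((a:ℝ)+b) - ((b:ℝ)-a+1)*y)) / lam := by
        rw [hlam]
        field_simp
        linear_combination (Jf1 n a b y) * hode
      rw [expr]
      apply div_nonpos_of_nonpos_of_nonneg _ hlam0.le
      nlinarith [sq_nonneg (Jf1 n a b y)]
  have hxm : (-1:ℝ) ∈ Set.Icc (-1:ℝ) 1 := by norm_num
  have h1 := hanti hxm hx hx.1
  have h2 : (Jf n a b x)^2 ≤ F x := by
    have hnn : 0 ≤ (1 - x^2) * (Jf1 n a b x)^2 / lam := by
      apply div_nonneg _ hlam0.le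
      have hx1 : (-1:ℝ) ≤ x := hx.1
      have hx2 : x ≤ 1 := hx.2
      nlinarith [sq_nonneg (Jf1 n a b x),
        mul_nonneg (mul_nonneg (by linarith : (0:ℝ) ≤ 1 - x) (by linarith : (0:ℝ) ≤ 1 + x))
          (sq_nonneg (Jf1 n a b x))]
    simp only [hF]
    linarith
  have h3 : F (-1) = (Jf n a b (-1))^2 := by
    simp only [hF]
    norm_num
  linarith

lemma hrepr (n a b : ℕ) (x : ℝ) :
    Jf n a b x = 2^n * ((1 - x)^a * jacobiP n a b x) := by
  unfold Jf jacobiP phi cc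
  simp only [Finset.mul_sum]
  refine Finset.sum_congr rfl fun s hs => ?_
  have hsn : s ≤ n := by have := Finset.mem_range.mp hs; omega
  have h2 : (2:ℝ)^n = 2^s * 2^(n-s) := by rw [← pow_add]; congr 1; omega
  have hm : ((x-1)/2 : ℝ)^s = (-1:ℝ)^s * (1-x)^s / 2^s := by
    rw [div_pow, show (x - 1 : ℝ) = (-1) * (1-x) by ring, mul_pow]
  have hp : ((x+1)/2 : ℝ)^(n-s) = (1+x)^(n-s) / 2^(n-s) := by
    rw [div_pow, show (x + 1 : ℝ) = 1 + x by ring]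
  have e : (1-x : ℝ)^(a+s) = (1-x)^a * (1-x)^s := pow_add _ _ _
  rw [e, hm, hp, h2]
  have c1 : ((2:ℝ)^s) ≠ 0 := by positivity
  have c2 : ((2:ℝ)^(n-s)) ≠ 0 := by positivity
  field_simp

lemma jacobi_neg_one (n a b : ℕ) :
    jacobiP n a b (-1) = (-1:ℝ)^n * ((n+b).choose n : ℝ) := by
  unfold jacobiP
  rw [Finset.sum_eq_single n]
  · simp only [Nat.sub_self]
    norm_num
    ring
  · intro s hs hsne
    have : n - s ≠ 0 := by have := Finset.mem_range.mp hs; omega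
    have : ((-1:ℝ) + 1) / 2 = 0 := by norm_num
    rw [this, zero_pow ‹n - s ≠ 0›]
    ring
  · intro h
    exact absurd (Finset.self_mem_range_succ n) h

/-- For integers `α < 0 ≤ β` (here `α = -a` with `a ≥ 1`, `β = b`), the generalized
Jacobi polynomial `J_N^{α,β}(x) = (1-x)^a P_{N-a}^{a,b}(x)` attains its maximal absolute
value on `[-1,1]` at `x = -1`, with value `2^a · C(N-a+b, N-a)`. -/
theorem genJacobi_max_at_neg_one (a b N : ℕ) (ha : 1 ≤ a) (hN : a ≤ N) :
    IsGreatest ((fun x : ℝ => |(1 - x) ^ a * jacobiP (N - a) a b x|) '' Set.Icc (-1 : ℝ) 1)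
      (|(1 - (-1 : ℝ)) ^ a * jacobiP (N - a) a b (-1)|) ∧
    |(1 - (-1 : ℝ)) ^ a * jacobiP (N - a) a b (-1)| =
      2 ^ a * (Nat.choose (N - a + b) (N - a) : ℝ) := by
  set n := N - a with hn
  constructor
  · constructor
    · exact ⟨-1, by norm_num, rfl⟩
    · rintro y ⟨x, hx, rfl⟩
      simp only
      have hs := sq_le_endpoint n a b ha hx
      rw [hrepr n a b x, hrepr n a b (-1)] at hs
      have h2n : (0:ℝ) < 2^n := by positivity
      rw [show (2^n * ((1 - x)^a * jacobiP n a b x))^2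
            = (2^n)^2 * ((1 - x)^a * jacobiP n a b x)^2 from by ring,
          show (2^n * ((1 - (-1:ℝ))^a * jacobiP n a b (-1)))^2
            = (2^n)^2 * ((1 - (-1:ℝ))^a * jacobiP n a b (-1))^2 from by ring] at hs
      have h2sq : (0:ℝ) < (2^n)^2 := by positivity
      have hsq : ((1 - x)^a * jacobiP n a b x)^2 ≤ ((1 - (-1:ℝ))^a * jacobiP n a b (-1))^2 :=
        le_of_mul_le_mul_left hs h2sq
      nlinarith [sq_abs ((1 - x)^a * jacobiP n a b x),
        sq_abs ((1 - (-1:ℝ))^a * jacobiP n a b (-1)),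
        abs_nonneg ((1 - x)^a * jacobiP n a b x),
        abs_nonneg ((1 - (-1:ℝ))^a * jacobiP n a b (-1))]
  · rw [jacobi_neg_one, show (1 - (-1:ℝ)) = 2 by norm_num]
    rw [abs_mul, abs_mul, abs_pow, abs_pow]
    simp [abs_of_nonneg (Nat.cast_nonneg ((n+b).choose n) : (0:ℝ) ≤ _)]
end
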